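/- Let E be a metric space, T > 0, and A, B ⊆ E. The set { x ∈ C([0,T],E) : τ_{Å}(x) < τ_{B̄}(x) } is an open subset of C([0,T],E) for the topology of uniform convergence. -/

import Mathlib

open Set Filter Topology
open scoped ENNReal

/-- Entrance time of a set `S` for a continuous path `x : [0,T] → E`,
with values in the extended nonnegative reals (`sInf ∅ = ∞`). -/
noncomputable def entranceTime {E : Type*} [MetricSpace E] (T : ℝ) (S : Set E)
    (x : C(Set.Icc (0:ℝ) T, E)) : ℝ≥0∞ :=
  sInf ((fun t : Set.Icc (0:ℝ) T => ENNReal.ofReal (t : ℝ)) '' {t | x t ∈ S})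

/-- The set of paths entering the interior of `A` strictly before the closure of `B`
is open in `C([0,T],E)` with the topology of uniform convergence. -/
theorem isOpen_entranceTime_interior_lt_entranceTime_closure
    {E : Type*} [MetricSpace E] (T : ℝ) (hT : 0 < T) (A B : Set E) :
    IsOpen {x : C(Set.Icc (0:ℝ) T, E) |
      entranceTime T (interior A) x < entranceTime T (closure B) x} := by
  haveI : CompactSpace (Set.Icc (0:ℝ) T) := isCompact_iff_compactSpace.mp isCompact_Icc
  rw [Metric.isOpen_iff]
  intro x hx
  simp only [mem_setOf_eq, entranceTime] at hx
  obtain ⟨_, ⟨t₀, ht₀A, rfl⟩, ht₀lt⟩ := sInf_lt_iff.mp hx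
  -- ht₀A : x t₀ ∈ interior A
  obtain ⟨ε₁, hε₁pos, hball⟩ := Metric.isOpen_iff.mp isOpen_interior _ ht₀A
  -- every hitting time of closure B is > t₀
  have hkey : ∀ s : Set.Icc (0:ℝ) T, x s ∈ closure B → (t₀ : ℝ) < s := by
    intro s hs
    have h1 : ENNReal.ofReal (t₀ : ℝ) < ENNReal.ofReal (s : ℝ) :=
      lt_of_lt_of_le ht₀lt (sInf_le ⟨s, hs, rfl⟩)
    by_contra h
    exact absurd (ENNReal.ofReal_le_ofReal (not_lt.mp h)) (not_le.mpr h1)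
  have hFclosed : IsClosed {s : Set.Icc (0:ℝ) T | x s ∈ closure B} :=
    isClosed_closure.preimage x.continuous
  -- choose u > t₀ such that x avoids closure B on [0,u]
  obtain ⟨u, hut₀, huB⟩ : ∃ u : ℝ, (t₀ : ℝ) < u ∧
      ∀ s : Set.Icc (0:ℝ) T, (s : ℝ) ≤ u → x s ∉ closure B := by
    by_cases hF : {s : Set.Icc (0:ℝ) T | x s ∈ closure B}.Nonempty
    · obtain ⟨m, hmF, hmmin⟩ := hFclosed.isCompact.exists_isMinOn hF
        continuous_subtype_val.continuousOn
      have hm := hkey m hmF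
      refine ⟨((t₀ : ℝ) + m) / 2, by linarith, ?_⟩
      intro s hs hsB
      have h2 : (m : ℝ) ≤ s := hmmin hsB
      linarith
    · exact ⟨T + 1, by have := t₀.2.2; linarith,
        fun s _ hs => hF ⟨s, hs⟩⟩
  -- the set of times ≤ u is compact and nonempty
  have hKclosed : IsClosed {s : Set.Icc (0:ℝ) T | (s : ℝ) ≤ u} :=
    isClosed_Iic.preimage continuous_subtype_val
  have hKne : {s : Set.Icc (0:ℝ) T | (s : ℝ) ≤ u}.Nonempty := ⟨t₀, hut₀.le⟩
  obtain ⟨z, hzK, hzmin⟩ := hKclosed.isCompact.exists_isMinOn hKne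
    ((EMetric.continuous_infEdist.comp x.continuous)).continuousOn
  have hδpos : 0 < Metric.infEDist (x z) (closure B) := by
    rw [EMetric.infEdist_pos_iff_notMem_closure, closure_closure]
    exact huB z hzK
  obtain ⟨c, hc0, hcδ⟩ := exists_between hδpos
  set ε₂ : ℝ := c.toReal with hε₂def
  have hcne : c ≠ ⊤ := hcδ.ne_top
  have hε₂pos : 0 < ε₂ := ENNReal.toReal_pos hc0.ne' hcne
  have hofε₂ : ENNReal.ofReal ε₂ = c := ENNReal.ofReal_toReal hcne
  refine ⟨min ε₁ ε₂, lt_min hε₁pos hε₂pos, ?_⟩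
  intro y hy
  rw [Metric.mem_ball] at hy
  have hdist : ∀ s : Set.Icc (0:ℝ) T, dist (y s) (x s) < min ε₁ ε₂ :=
    fun s => lt_of_le_of_lt (ContinuousMap.dist_apply_le_dist s) hy
  -- y t₀ ∈ interior A
  have hyA : y t₀ ∈ interior A := by
    apply hball
    exact Metric.mem_ball.mpr (lt_of_lt_of_le (hdist t₀) (min_le_left _ _))
  -- y avoids closure B on [0,u]
  have hyB : ∀ s : Set.Icc (0:ℝ) T, (s : ℝ) ≤ u → y s ∉ closure B := by
    intro s hs hsB
    have h1 : EMetric.infEdist (x s) (closure B) ≤ edist (x s) (y s) :=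
      EMetric.infEdist_le_edist_of_mem hsB
    have h2 : edist (x s) (y s) < c := by
      rw [edist_dist, ← hofε₂]
      exact ENNReal.ofReal_lt_ofReal_iff hε₂pos |>.mpr
        (by rw [dist_comm]; exact lt_of_lt_of_le (hdist s) (min_le_right _ _))
    have h3 : c < EMetric.infEdist (x s) (closure B) := lt_of_lt_of_le hcδ (hzmin hs)
    exact absurd (lt_of_le_of_lt h1 h2) (not_lt.mpr h3.le)
  -- conclude
  show entranceTime T (interior A) y < entranceTime T (closure B) y
  have hle : entranceTime T (interior A) y ≤ ENNReal.ofReal (t₀ : ℝ) :=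
    sInf_le ⟨t₀, hyA, rfl⟩
  have hge : ENNReal.ofReal u ≤ entranceTime T (closure B) y := by
    apply le_sInf
    rintro _ ⟨s, hsB, rfl⟩
    have : u < (s : ℝ) := lt_of_not_ge fun h => hyB s h hsB
    exact ENNReal.ofReal_le_ofReal this.le
  have hlt : ENNReal.ofReal (t₀ : ℝ) < ENNReal.ofReal u :=
    (ENNReal.ofReal_lt_ofReal_iff_of_nonneg t₀.2.1).mpr hut₀
  exact lt_of_le_of_lt hle (lt_of_lt_of_le hlt hge)
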